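/- Let P = k[x₁,…,x_n] and Q = k[y₁,…,y_n] be polynomial rings, each equipped with a Poisson bracket. If the modular derivation of P is identically zero (P is unimodular) while the modular derivation of Q is not identically zero (Q is non-unimodular), then P and Q are not isomorphic as Poisson algebras. -/

import Mathlib

open MvPolynomial

/-- A Poisson bracket on a commutative `k`-algebra: a `k`-bilinear antisymmetric operation
satisfying the Jacobi identity and the Leibniz rule. -/
structure PoissonStructure (k : Type*) [CommRing k] (A : Type*) [CommRing A] [Algebra k A] where
  bracket : A → A → A
  add_right : ∀ a b c, bracket a (b + c) = bracket a b + bracket a c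
  smul_right : ∀ (r : k) (a b : A), bracket a (r • b) = r • bracket a b
  antisymm : ∀ a b, bracket a b = -bracket b a
  jacobi : ∀ a b c,
    bracket a (bracket b c) + bracket b (bracket c a) + bracket c (bracket a b) = 0
  leibniz : ∀ a b c, bracket a (b * c) = bracket a b * c + b * bracket a c

noncomputable section AuxPoisson

open Finset

variable {k : Type*} [CommRing k]

private lemma aux_pderiv_comm {n : ℕ} (i j : Fin n) (f : MvPolynomial (Fin n) k) :
    pderiv i (pderiv j f) = pderiv j (pderiv i f) := by
  induction f using MvPolynomial.induction_on with
  | C a => simp [pderiv_C]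
  | add p q hp hq => simp [map_add, hp, hq]
  | mul_X p m ih =>
    have h1 : ∀ a b : Fin n, pderiv a (pderiv b (X m : MvPolynomial (Fin n) k)) = 0 := by
      intro a b
      rcases eq_or_ne m b with rfl | h
      · simp
      · simp [pderiv_X_of_ne h]
    rw [pderiv_mul, map_add, pderiv_mul, pderiv_mul, pderiv_mul, map_add, pderiv_mul,
      pderiv_mul, ih, h1, h1]
    ring

private lemma aux_der_prod {A : Type*} [CommRing A] [Algebra k A] (E : Derivation k A A)
    {ι : Type*} [DecidableEq ι] (s : Finset ι) (f : ι → A) :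
    E (∏ i ∈ s, f i) = ∑ i ∈ s, (∏ j ∈ s.erase i, f j) * E (f i) := by
  induction s using Finset.induction_on with
  | empty => simp
  | @insert a s ha ih =>
    rw [Finset.prod_insert ha, E.leibniz, smul_eq_mul, smul_eq_mul, ih, Finset.sum_insert ha,
      Finset.erase_insert ha, Finset.mul_sum]
    rw [add_comm]
    congr 1
    refine Finset.sum_congr rfl fun i hi => ?_
    rw [Finset.erase_insert_of_ne (by rintro rfl; exact ha hi), Finset.prod_insert
      (fun h => ha (Finset.erase_subset _ _ h))]
    ring
private lemma aux_der_comp {n : ℕ}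
    (d : Derivation k (MvPolynomial (Fin n) k) (MvPolynomial (Fin n) k))
    (χ : MvPolynomial (Fin n) k →ₐ[k] MvPolynomial (Fin n) k) (a : MvPolynomial (Fin n) k) :
    d (χ a) = ∑ j, d (χ (X j)) * χ (pderiv j a) := by
  induction a using MvPolynomial.induction_on with
  | C r =>
    have h : χ (C r) = C r := by
      simpa [MvPolynomial.algebraMap_eq] using χ.commutes r
    simp [h, derivation_C, pderiv_C]
  | add p q hp hq =>
    simp only [map_add, hp, hq, mul_add, ← Finset.sum_add_distrib]
  | mul_X p m ih =>
    rw [map_mul, d.leibniz, smul_eq_mul, smul_eq_mul, ih]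
    have h2 : ∀ j : Fin n, d (χ (X j)) * χ (pderiv j (p * X m)) =
        d (χ (X j)) * χ (pderiv j p) * χ (X m) +
          (if j = m then χ p * d (χ (X m)) else 0) := by
      intro j
      rw [pderiv_mul, map_add, map_mul, map_mul]
      rcases eq_or_ne j m with rfl | h
      · rw [if_pos rfl, pderiv_X_self, map_one, mul_one]; ring
      · rw [if_neg h, pderiv_X_of_ne (Ne.symm h), map_zero, mul_zero, add_zero, mul_assoc]
        exact (add_zero _).symm
    rw [Finset.sum_congr rfl fun j _ => h2 j, Finset.sum_add_distrib, Finset.sum_ite_eq'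
      Finset.univ m fun _ => χ p * d (χ (X m)), if_pos (Finset.mem_univ m), Finset.mul_sum]
    rw [add_comm]
    congr 1
    refine Finset.sum_congr rfl fun j _ => ?_
    ring

private lemma aux_der_det {A : Type*} [CommRing A] [Algebra k A] (E : Derivation k A A)
    {m : ℕ} (M : Matrix (Fin m) (Fin m) A) :
    E M.det = ∑ r, (M.updateCol r fun i => E (M i r)).det := by
  rw [Matrix.det_apply, map_sum]
  have h1 : ∀ σ : Equiv.Perm (Fin m), E (Equiv.Perm.sign σ • ∏ i, M (σ i) i) =
      Equiv.Perm.sign σ • ∑ r, (∏ i ∈ Finset.univ.erase r, M (σ i) i) * E (M (σ r) r) := by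
    intro σ
    rw [Units.smul_def, Units.smul_def, map_zsmul, aux_der_prod]
  rw [Finset.sum_congr rfl fun σ _ => h1 σ]
  simp only [Finset.smul_sum]
  rw [Finset.sum_comm]
  refine Finset.sum_congr rfl fun r _ => ?_
  rw [Matrix.det_apply]
  refine Finset.sum_congr rfl fun σ _ => ?_
  congr 1
  have hu : (fun i => M.updateCol r (fun i' => E (M i' r)) (σ i) i) =
      Function.update (fun i => M (σ i) i) r (E (M (σ r) r)) := by
    funext i
    rcases eq_or_ne i r with rfl | h
    · simp [Matrix.updateCol_apply]
    · simp [Matrix.updateCol_apply, h, Function.update_of_ne h]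
  refine Eq.symm ?_
  calc ∏ i, M.updateCol r (fun i' => E (M i' r)) (σ i) i
      = ∏ i, Function.update (fun i => M (σ i) i) r (E (M (σ r) r)) i := by rw [hu]
    _ = E (M (σ r) r) * ∏ i ∈ Finset.univ.erase r, M (σ i) i := by
        rw [Finset.prod_update_of_mem (Finset.mem_univ r), Finset.erase_eq]
    _ = (∏ i ∈ Finset.univ.erase r, M (σ i) i) * E (M (σ r) r) := mul_comm _ _
private lemma aux_isUnit_C {k : Type*} [Field k] : ∀ {n : ℕ} (p : MvPolynomial (Fin n) k),
    IsUnit p → ∃ c : k, p = C c := by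
  intro n
  induction n with
  | zero =>
    intro p _
    obtain ⟨c, rfl⟩ := MvPolynomial.C_surjective (Fin 0) p
    exact ⟨c, rfl⟩
  | succ n ih =>
    intro p hp
    have h2 : IsUnit (finSuccEquiv k n p) := hp.map (finSuccEquiv k n)
    obtain ⟨r, hr, hCr⟩ := Polynomial.isUnit_iff.mp h2
    obtain ⟨c, rfl⟩ := ih r hr
    refine ⟨c, ?_⟩
    have h3 := congrArg (finSuccEquiv k n).symm hCr
    rw [AlgEquiv.symm_apply_apply] at h3
    rw [← h3]
    exact RingHom.congr_fun (MvPolynomial.finSuccEquiv_comp_C_eq_C n) c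

open Matrix in
private lemma aux_main {k : Type*} [Field k] {n : ℕ}
    (φ : MvPolynomial (Fin n) k ≃ₐ[k] MvPolynomial (Fin n) k)
    (D : Derivation k (MvPolynomial (Fin n) k) (MvPolynomial (Fin n) k))
    (hD : ∑ j, pderiv j (D (X j)) = 0) :
    ∑ i, pderiv i (φ (D (φ.symm (X i)))) = 0 := by
  classical
  set m : Fin n → Fin n → MvPolynomial (Fin n) k := fun i j => pderiv i (φ (X j)) with hm
  set nn : Fin n → Fin n → MvPolynomial (Fin n) k :=
    fun j r => φ (pderiv j (φ.symm (X r))) with hnn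
  -- chain rule
  have hchain : ∀ (i : Fin n) (a : MvPolynomial (Fin n) k),
      pderiv i (φ a) = ∑ j, m i j * φ (pderiv j a) := by
    intro i a
    simpa [hm] using aux_der_comp (pderiv i) φ.toAlgHom a
  -- M * N = 1
  have hMN1 : ∀ i r, (∑ j, m i j * nn j r) = if i = r then 1 else 0 := by
    intro i r
    have h := hchain i (φ.symm (X r))
    rw [AlgEquiv.apply_symm_apply] at h
    rw [← h]
    rcases eq_or_ne i r with rfl | hne
    · simp
    · rw [if_neg hne, pderiv_X_of_ne (Ne.symm hne)]
  have hMNmat : Matrix.of m * Matrix.of nn = 1 := by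
    refine Matrix.ext fun i r => ?_
    rw [Matrix.mul_apply, Matrix.one_apply]
    simpa using hMN1 i r
  have hNMmat : Matrix.of nn * Matrix.of m = 1 := mul_eq_one_comm.mp hMNmat
  have hNM1 : ∀ a b, (∑ j, nn a j * m j b) = if a = b then 1 else 0 := by
    intro a b
    have h := congrFun (congrFun hNMmat a) b
    rw [Matrix.mul_apply, Matrix.one_apply] at h
    simpa using h
  -- the conjugated partial derivatives
  set E : Fin n → Derivation k (MvPolynomial (Fin n) k) (MvPolynomial (Fin n) k) := fun l =>
    { toLinearMap := φ.toLinearMap ∘ₗ ((pderiv l).toLinearMap ∘ₗ φ.symm.toLinearMap)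
      map_one_eq_zero' := by simp
      leibniz' := fun a b => by
        simp only [LinearMap.coe_comp, Function.comp_apply, AlgEquiv.toLinearMap_apply,
          Derivation.coeFn_coe, smul_eq_mul]
        rw [_root_.map_mul, Derivation.leibniz, smul_eq_mul, smul_eq_mul, _root_.map_add,
          _root_.map_mul, _root_.map_mul, AlgEquiv.apply_symm_apply,
          AlgEquiv.apply_symm_apply] } with hEdef
  have hE : ∀ l a, E l a = φ (pderiv l (φ.symm a)) := fun _ _ => rfl
  have hEN : ∀ l j i, E l (nn j i) = φ (pderiv l (pderiv j (φ.symm (X i)))) := by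
    intro l j i
    rw [hE, hnn, AlgEquiv.symm_apply_apply]
  -- determinant of the Jacobian matrix is a unit, hence a constant
  have hdetU : IsUnit (Matrix.of m).det := by
    refine IsUnit.of_mul_eq_one (Matrix.of nn).det ?_
    rw [← Matrix.det_mul, hMNmat, Matrix.det_one]
  obtain ⟨c, hc⟩ := aux_isUnit_C _ hdetU
  have hEdet : ∀ l, E l (Matrix.of m).det = 0 := by
    intro l
    have hsymmC : φ.symm (C c : MvPolynomial (Fin n) k) = C c := by
      simpa [MvPolynomial.algebraMap_eq] using φ.symm.commutes c
    rw [hc, hE, hsymmC, pderiv_C, map_zero]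
  -- adjugate = det • N
  have hAdj : (Matrix.of m).adjugate = (Matrix.of m).det • Matrix.of nn := by
    calc (Matrix.of m).adjugate = (Matrix.of nn * Matrix.of m) * (Matrix.of m).adjugate := by
          rw [hNMmat, Matrix.one_mul]
      _ = Matrix.of nn * (Matrix.of m * (Matrix.of m).adjugate) := by rw [Matrix.mul_assoc]
      _ = Matrix.of nn * ((Matrix.of m).det • 1) := by rw [Matrix.mul_adjugate]
      _ = (Matrix.of m).det • Matrix.of nn := by rw [Matrix.mul_smul, Matrix.mul_one]
  -- "Jacobi's formula" consequence: tr (N * E_l M) = 0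
  have hS : ∀ l, (∑ r, ∑ c', nn r c' * E l (m c' r)) = 0 := by
    intro l
    have h0 := hEdet l
    rw [aux_der_det (E l) (Matrix.of m)] at h0
    have h1 : ∀ r : Fin n, ((Matrix.of m).updateCol r fun i => E l (Matrix.of m i r)).det
        = ∑ c', E l (m c' r) * ((Matrix.of m).det * nn r c') := by
      intro r
      rw [← Matrix.cramer_apply]
      have hb : (fun i => E l (Matrix.of m i r))
          = ∑ c', E l (m c' r) • (Pi.single c' 1 : Fin n → MvPolynomial (Fin n) k) := by
        funext i
        rw [Finset.sum_apply]
        simp [Pi.single_apply]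
      rw [hb, _root_.map_sum, Finset.sum_apply]
      refine Finset.sum_congr rfl fun c' _ => ?_
      rw [LinearMap.map_smul, Pi.smul_apply, smul_eq_mul]
      congr 1
      have h2 : Matrix.cramer (Matrix.of m) (Pi.single c' 1) r
          = ((Matrix.of m)ᵀ).adjugate c' r := by
        rw [Matrix.adjugate_def, Matrix.transpose_transpose, Matrix.of_apply]
      rw [h2, ← Matrix.adjugate_transpose, Matrix.transpose_apply, hAdj, Matrix.smul_apply,
        smul_eq_mul, Matrix.of_apply]
    rw [Finset.sum_congr rfl fun r _ => h1 r] at h0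
    have h3 : (∑ r, ∑ c', E l (m c' r) * ((Matrix.of m).det * nn r c'))
        = (Matrix.of m).det * ∑ r, ∑ c', nn r c' * E l (m c' r) := by
      rw [Finset.mul_sum]
      refine Finset.sum_congr rfl fun r _ => ?_
      rw [Finset.mul_sum]
      exact Finset.sum_congr rfl fun c' _ => by ring
    rw [h3] at h0
    exact (mul_eq_zero.mp h0).resolve_left hdetU.ne_zero
  -- tr (M * E_l N) = 0
  have hT : ∀ l, (∑ i, ∑ j, m i j * E l (nn j i)) = 0 := by
    intro l
    have h1 : ∀ a, (∑ j, (m j a * E l (nn a j) + nn a j * E l (m j a))) = 0 := by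
      intro a
      have h2 : (∑ j, nn a j * m j a) = 1 := by rw [hNM1 a a, if_pos rfl]
      have h3 := congrArg (E l) h2
      rw [_root_.map_sum, Derivation.map_one_eq_zero] at h3
      simp only [Derivation.leibniz, smul_eq_mul] at h3
      rw [← h3]
      exact Finset.sum_congr rfl fun j _ => by ring
    have h4 : (∑ a, ∑ j, m j a * E l (nn a j)) + (∑ a, ∑ j, nn a j * E l (m j a)) = 0 := by
      rw [← Finset.sum_add_distrib]
      refine Finset.sum_eq_zero fun a _ => ?_
      rw [← Finset.sum_add_distrib]
      exact h1 a
    rw [hS l, add_zero] at h4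
    rw [Finset.sum_comm]
    exact h4
  -- the final computation
  have hst : ∀ i j : Fin n, φ (pderiv j (D (φ.symm (X i)))) =
      ∑ l, (φ (pderiv j (D (X l))) * nn l i + φ (D (X l)) * E l (nn j i)) := by
    intro i j
    have h2 : D (φ.symm (X i)) = ∑ l, D (X l) * pderiv l (φ.symm (X i)) := by
      simpa using aux_der_comp D (AlgHom.id k _) (φ.symm (X i))
    rw [h2, _root_.map_sum, _root_.map_sum]
    refine Finset.sum_congr rfl fun l _ => ?_
    rw [pderiv_mul, _root_.map_add, _root_.map_mul, _root_.map_mul, hEN l j i, aux_pderiv_comm]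
  calc ∑ i, pderiv i (φ (D (φ.symm (X i))))
      = ∑ i, ∑ j, m i j * φ (pderiv j (D (φ.symm (X i)))) :=
        Finset.sum_congr rfl fun i _ => hchain i _
    _ = ∑ i, ∑ j, ∑ l, (m i j * (φ (pderiv j (D (X l))) * nn l i)
          + m i j * (φ (D (X l)) * E l (nn j i))) := by
        refine Finset.sum_congr rfl fun i _ => Finset.sum_congr rfl fun j _ => ?_
        rw [hst i j, Finset.mul_sum]
        exact Finset.sum_congr rfl fun l _ => by ring
    _ = (∑ i, ∑ j, ∑ l, m i j * (φ (pderiv j (D (X l))) * nn l i))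
          + (∑ i, ∑ j, ∑ l, m i j * (φ (D (X l)) * E l (nn j i))) := by
        simp only [Finset.sum_add_distrib]
    _ = 0 := by
        have hA : (∑ i, ∑ j, ∑ l, m i j * (φ (pderiv j (D (X l))) * nn l i)) = 0 := by
          have h5 : ∀ j l : Fin n, (∑ i, m i j * (φ (pderiv j (D (X l))) * nn l i))
              = φ (pderiv j (D (X l))) * ∑ i, nn l i * m i j := by
            intro j l
            rw [Finset.mul_sum]
            exact Finset.sum_congr rfl fun i _ => by ring
          calc (∑ i, ∑ j, ∑ l, m i j * (φ (pderiv j (D (X l))) * nn l i))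
              = ∑ j, ∑ l, ∑ i, m i j * (φ (pderiv j (D (X l))) * nn l i) := by
                rw [Finset.sum_comm]
                exact Finset.sum_congr rfl fun j _ => Finset.sum_comm
            _ = ∑ j, ∑ l, φ (pderiv j (D (X l))) * (if l = j then 1 else 0) := by
                refine Finset.sum_congr rfl fun j _ => Finset.sum_congr rfl fun l _ => ?_
                rw [h5 j l, hNM1 l j]
            _ = ∑ j, φ (pderiv j (D (X j))) := by
                refine Finset.sum_congr rfl fun j _ => ?_
                simp
            _ = φ (∑ j, pderiv j (D (X j))) := (_root_.map_sum φ _ _).symm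
            _ = 0 := by rw [hD, map_zero]
        have hB : (∑ i, ∑ j, ∑ l, m i j * (φ (D (X l)) * E l (nn j i))) = 0 := by
          calc (∑ i, ∑ j, ∑ l, m i j * (φ (D (X l)) * E l (nn j i)))
              = ∑ l, ∑ i, ∑ j, m i j * (φ (D (X l)) * E l (nn j i)) := by
                rw [show (∑ i, ∑ j, ∑ l, m i j * (φ (D (X l)) * E l (nn j i)))
                    = ∑ i, ∑ l, ∑ j, m i j * (φ (D (X l)) * E l (nn j i)) from
                  Finset.sum_congr rfl fun i _ => Finset.sum_comm]
                exact Finset.sum_comm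
            _ = ∑ l, φ (D (X l)) * ∑ i, ∑ j, m i j * E l (nn j i) := by
                refine Finset.sum_congr rfl fun l _ => ?_
                rw [Finset.mul_sum]
                refine Finset.sum_congr rfl fun i _ => ?_
                rw [Finset.mul_sum]
                exact Finset.sum_congr rfl fun j _ => by ring
            _ = 0 := by
                refine Finset.sum_eq_zero fun l _ => ?_
                rw [hT l, mul_zero]
        rw [hA, hB, add_zero]

end AuxPoisson

/-- If the modular derivation `f ↦ Σᵢ ∂{zᵢ,f}/∂zᵢ` of `P` is identically zero while that of
`Q` is not, then `P` and `Q` are not isomorphic as Poisson algebras. -/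
theorem stmt_1 {k : Type*} [Field k] [IsAlgClosed k] [CharZero k] (n : ℕ)
    (P Q : PoissonStructure k (MvPolynomial (Fin n) k))
    (hP : ∀ f, ∑ i, pderiv i (P.bracket (X i) f) = 0)
    (hQ : ∃ f, ∑ i, pderiv i (Q.bracket (X i) f) ≠ 0) :
    ¬ ∃ e : MvPolynomial (Fin n) k ≃ₐ[k] MvPolynomial (Fin n) k,
        ∀ f g, e (P.bracket f g) = Q.bracket (e f) (e g) := by
  rintro ⟨e, he⟩
  obtain ⟨f, hf⟩ := hQ
  apply hf
  have hbr1 : P.bracket 1 (e.symm f) = 0 := by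
    have h1 : P.bracket (e.symm f) 1 = 0 := by
      have h := P.leibniz (e.symm f) 1 1
      rw [mul_one, mul_one, one_mul] at h
      exact (left_eq_add.mp h)
    rw [P.antisymm 1 (e.symm f), h1, neg_zero]
  let D : Derivation k (MvPolynomial (Fin n) k) (MvPolynomial (Fin n) k) :=
    { toFun := fun a => P.bracket a (e.symm f)
      map_add' := fun x y => by
        show P.bracket (x + y) (e.symm f) = P.bracket x (e.symm f) + P.bracket y (e.symm f)
        rw [P.antisymm (x + y), P.add_right, P.antisymm x, P.antisymm y]
        ring
      map_smul' := fun r x => by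
        show P.bracket (r • x) (e.symm f) = (RingHom.id k) r • P.bracket x (e.symm f)
        rw [RingHom.id_apply, P.antisymm (r • x), P.smul_right, P.antisymm x, smul_neg]
      map_one_eq_zero' := hbr1
      leibniz' := fun a c => by
        show P.bracket (a * c) (e.symm f) =
          a • P.bracket c (e.symm f) + c • P.bracket a (e.symm f)
        simp only [smul_eq_mul]
        rw [P.antisymm (a * c) (e.symm f), P.leibniz, P.antisymm (e.symm f) a,
          P.antisymm (e.symm f) c]
        ring }
  have hD0 : ∑ j, pderiv j (D (X j)) = 0 := hP (e.symm f)
  have key := aux_main e D hD0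
  have hterm : ∀ i : Fin n, Q.bracket (X i) f = e (D (e.symm (X i))) := by
    intro i
    have h := he (e.symm (X i)) (e.symm f)
    rw [AlgEquiv.apply_symm_apply, AlgEquiv.apply_symm_apply] at h
    exact h.symm
  calc ∑ i, pderiv i (Q.bracket (X i) f)
      = ∑ i, pderiv i (e (D (e.symm (X i)))) :=
        Finset.sum_congr rfl fun i _ => by rw [hterm i]
    _ = 0 := key
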